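/- Let g¹,...,g^N be vectors in R^d with ||g^i||² ≤ G² wherever they appear over iterations τ = t₀,...,t−1 with t − t₀ ≤ I. Define x̄_τ and x^i_τ by the recursions x^i_{τ+1} = x^i_τ − γ g^i_τ and x̄_{τ+1} = x̄_τ − γ (1/N)∑_j g^j_τ, with x̄_{t₀} = x^i_{t₀}. Then ||x̄_t − x^i_t||² ≤ 4γ²I²G². -/
import Mathlib


open scoped BigOperators

/-- Lemma 3 of the paper (deviation of local models in local SGD): starting from
a common point at iteration `t₀`, after at most `I` local steps with gradients of
norm squared at most `G²` and step size `γ`, each local model deviates from the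
virtual averaged iterate by at most `4γ²I²G²` in squared norm. -/
theorem stmt8 {d N : ℕ} (hN : 0 < N) (γ G : ℝ) (hγ : 0 < γ) (I t₀ t : ℕ)
    (ht₀ : t₀ ≤ t) (hI : t - t₀ ≤ I)
    (g : Fin N → ℕ → EuclideanSpace ℝ (Fin d))
    (x : Fin N → ℕ → EuclideanSpace ℝ (Fin d))
    (xbar : ℕ → EuclideanSpace ℝ (Fin d))
    (hG : ∀ i τ, ‖g i τ‖ ^ 2 ≤ G ^ 2)
    (hinit : ∀ i, xbar t₀ = x i t₀)
    (hlocal : ∀ i τ, t₀ ≤ τ → τ < t → x i (τ + 1) = x i τ - γ • g i τ)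
    (havg : ∀ τ, t₀ ≤ τ → τ < t →
      xbar (τ + 1) = xbar τ - γ • ((N : ℝ)⁻¹ • ∑ j, g j τ)) :
    ∀ i, ‖xbar t - x i t‖ ^ 2 ≤ 4 * γ ^ 2 * I ^ 2 * G ^ 2 := by
  intro i
  have hgbd : ∀ (j : Fin N) (τ : ℕ), ‖g j τ‖ ≤ |G| := by
    intro j τ
    nlinarith [hG j τ, norm_nonneg (g j τ), abs_nonneg G, sq_abs G]
  have havgbd : ∀ τ : ℕ, ‖(N : ℝ)⁻¹ • ∑ j, g j τ‖ ≤ |G| := by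
    intro τ
    have hNpos : (0:ℝ) < N := by exact_mod_cast hN
    have h1 : ‖∑ j, g j τ‖ ≤ ∑ j : Fin N, ‖g j τ‖ := norm_sum_le _ _
    have h2 : ∑ j : Fin N, ‖g j τ‖ ≤ ∑ _j : Fin N, |G| :=
      Finset.sum_le_sum fun j _ => hgbd j τ
    have h3 : (∑ _j : Fin N, |G| : ℝ) = N * |G| := by
      simp [Finset.sum_const, mul_comm]
    rw [norm_smul]
    have : ‖((N:ℝ)⁻¹ : ℝ)‖ = (N:ℝ)⁻¹ := by
      rw [Real.norm_eq_abs, abs_of_pos (inv_pos.mpr hNpos)]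
    rw [this]
    calc (N:ℝ)⁻¹ * ‖∑ j, g j τ‖ ≤ (N:ℝ)⁻¹ * (N * |G|) := by
          apply mul_le_mul_of_nonneg_left _ (le_of_lt (inv_pos.mpr hNpos))
          linarith [h1, h2, h3.le, h3.ge]
      _ = |G| := by field_simp
  have key : ∀ k : ℕ, t₀ + k ≤ t →
      ‖xbar (t₀ + k) - x i (t₀ + k)‖ ≤ γ * k * (2 * |G|) := by
    intro k
    induction k with
    | zero => simp [hinit i]
    | succ n ih =>
      intro hle
      have h1 : t₀ ≤ t₀ + n := Nat.le_add_right _ _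
      have h2 : t₀ + n < t := by omega
      have hx := hlocal i (t₀ + n) h1 h2
      have hb := havg (t₀ + n) h1 h2
      have hsplit : xbar (t₀ + (n + 1)) - x i (t₀ + (n + 1)) =
          (xbar (t₀ + n) - x i (t₀ + n)) +
            γ • (g i (t₀ + n) - (N : ℝ)⁻¹ • ∑ j, g j (t₀ + n)) := by
        have : t₀ + (n + 1) = (t₀ + n) + 1 := by omega
        rw [this, hx, hb]
        module
      rw [hsplit]
      have hnorm2 : ‖γ • (g i (t₀ + n) - (N : ℝ)⁻¹ • ∑ j, g j (t₀ + n))‖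
          ≤ γ * (2 * |G|) := by
        rw [norm_smul, Real.norm_eq_abs, abs_of_pos hγ]
        apply mul_le_mul_of_nonneg_left _ hγ.le
        calc ‖g i (t₀ + n) - (N : ℝ)⁻¹ • ∑ j, g j (t₀ + n)‖
            ≤ ‖g i (t₀ + n)‖ + ‖(N : ℝ)⁻¹ • ∑ j, g j (t₀ + n)‖ := norm_sub_le _ _
          _ ≤ |G| + |G| := add_le_add (hgbd i _) (havgbd _)
          _ = 2 * |G| := by ring
      calc ‖(xbar (t₀ + n) - x i (t₀ + n)) +
            γ • (g i (t₀ + n) - (N : ℝ)⁻¹ • ∑ j, g j (t₀ + n))‖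
          ≤ ‖xbar (t₀ + n) - x i (t₀ + n)‖ +
            ‖γ • (g i (t₀ + n) - (N : ℝ)⁻¹ • ∑ j, g j (t₀ + n))‖ := norm_add_le _ _
        _ ≤ γ * n * (2 * |G|) + γ * (2 * |G|) := add_le_add (ih (by omega)) hnorm2
        _ = γ * (n + 1) * (2 * |G|) := by ring
        _ = γ * ((n : ℕ) + 1 : ℕ) * (2 * |G|) := by push_cast; ring
  have hfin := key (t - t₀) (by omega)
  rw [show t₀ + (t - t₀) = t by omega] at hfin
  have hIle : ((t - t₀ : ℕ) : ℝ) ≤ (I : ℝ) := by exact_mod_cast hI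
  have hnonneg : (0:ℝ) ≤ ‖xbar t - x i t‖ := norm_nonneg _
  have hGabs : |G| ^ 2 = G ^ 2 := sq_abs G
  have hc : ‖xbar t - x i t‖ ≤ γ * (I : ℝ) * (2 * |G|) := by
    refine le_trans hfin ?_
    have h2G : (0:ℝ) ≤ 2 * |G| := by positivity
    nlinarith [mul_le_mul_of_nonneg_left hIle hγ.le]
  have hsq : ‖xbar t - x i t‖ ^ 2 ≤ (γ * (I : ℝ) * (2 * |G|)) ^ 2 :=
    pow_le_pow_left₀ hnonneg hc 2
  calc ‖xbar t - x i t‖ ^ 2 ≤ (γ * (I : ℝ) * (2 * |G|)) ^ 2 := hsq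
    _ = 4 * γ ^ 2 * (I:ℝ) ^ 2 * |G| ^ 2 := by ring
    _ = 4 * γ ^ 2 * (I:ℝ) ^ 2 * G ^ 2 := by rw [hGabs]
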